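/- Let T > 0 and K > 0, and for t ∈ [0,T) and x > 0 let F(t,x) := ∫_ℝ (x e^{z√(T−t) − (T−t)/2} − K)_+ (2π)^{−1/2} e^{−z²/2} dz. Then for each t ∈ [0,T) the function x ↦ F(t,x) is twice differentiable on (0,∞) and ∂²F/∂x²(t,x) = (1/(x √(2π(T−t)))) · exp(−(log(x/K) + (T−t)/2)² / (2(T−t))). -/

import Mathlib

open MeasureTheory Real

/-- The Black–Scholes call price function (volatility 1, maturity `T`, strike `K`):
`F(t,x) = ∫ (x e^{z√(T-t) - (T-t)/2} - K)_+ (2π)^{-1/2} e^{-z²/2} dz`. -/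
noncomputable def bsCall (T K t x : ℝ) : ℝ :=
  ∫ z : ℝ, max (x * Real.exp (z * Real.sqrt (T - t) - (T - t) / 2) - K) 0 *
    (Real.exp (-z ^ 2 / 2) / Real.sqrt (2 * Real.pi))

/-- Standard normal density. -/
noncomputable def nphi (z : ℝ) : ℝ := Real.exp (-z ^ 2 / 2) / Real.sqrt (2 * Real.pi)

/-- Standard normal CDF. -/
noncomputable def nPhi (a : ℝ) : ℝ := ∫ z in Set.Iic a, nphi z

lemma nphi_cont : Continuous nphi := by
  unfold nphi
  exact (Real.continuous_exp.comp (by continuity)).div_const _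

lemma nphi_int : Integrable nphi := by
  have h : Integrable (fun z : ℝ => Real.exp (-(1/2) * z ^ 2)) :=
    integrable_exp_neg_mul_sq (by norm_num)
  have : nphi = fun z => Real.exp (-(1/2) * z ^ 2) / Real.sqrt (2 * Real.pi) := by
    funext z; unfold nphi; ring_nf
  rw [this]
  exact h.div_const _

lemma hasDerivAt_nPhi (a : ℝ) : HasDerivAt nPhi (nphi a) a := by
  have hfun : nPhi = fun a => nPhi 0 + ∫ z in (0:ℝ)..a, nphi z := by
    funext b
    have := intervalIntegral.integral_Iic_sub_Iic (μ := volume) (f := nphi)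
      (nphi_int.integrableOn) (nphi_int.integrableOn) (a := 0) (b := b)
    unfold nPhi
    linarith [this]
  rw [hfun]
  have := intervalIntegral.integral_hasDerivAt_right (f := nphi) (a := 0) (b := a)
    (nphi_int.intervalIntegrable) (nphi_cont.stronglyMeasurableAtFilter _ _)
    nphi_cont.continuousAt
  simpa using this.const_add (nPhi 0)

lemma integral_Ici_nphi (b : ℝ) : (∫ z in Set.Ici b, nphi z) = nPhi (-b) := by
  rw [← integral_indicator measurableSet_Ici, ← integral_neg_eq_self]
  have h : ∀ z : ℝ, Set.indicator (Set.Ici b) nphi (-z)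
      = Set.indicator (Set.Iic (-b)) nphi z := by
    intro z
    have heven : nphi (-z) = nphi z := by simp [nphi]
    by_cases h : z ≤ -b
    · simp only [Set.indicator_apply, Set.mem_Ici, Set.mem_Iic, heven,
        if_pos h, if_pos (by linarith : b ≤ -z)]
    · simp only [Set.indicator_apply, Set.mem_Ici, Set.mem_Iic, heven,
        if_neg h, if_neg (by intro hc; apply h; linarith : ¬ b ≤ -z)]
  simp_rw [h]
  rw [integral_indicator measurableSet_Iic]
  rfl

lemma integral_Ici_nphi_shift (a σ : ℝ) :
    (∫ z in Set.Ici a, nphi (z - σ)) = nPhi (-(a - σ)) := by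
  rw [← integral_Ici_nphi, ← integral_indicator measurableSet_Ici,
    ← integral_indicator measurableSet_Ici,
    ← integral_sub_right_eq_self (Set.indicator (Set.Ici (a - σ)) nphi) σ]
  congr 1; funext z
  by_cases h : a ≤ z
  · simp only [Set.indicator_apply, Set.mem_Ici, if_pos h,
      if_pos (by linarith : a - σ ≤ z - σ)]
  · simp only [Set.indicator_apply, Set.mem_Ici, if_neg h,
      if_neg (by intro hc; apply h; linarith : ¬ a - σ ≤ z - σ)]

lemma bs_integral_eq (σ K x : ℝ) (hσ : 0 < σ) (hK : 0 < K) (hx : 0 < x) :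
    (∫ z : ℝ, max (x * Real.exp (z * σ - σ ^ 2 / 2) - K) 0 * nphi z)
      = x * nPhi ((Real.log x - Real.log K + σ ^ 2 / 2) / σ)
        - K * nPhi ((Real.log x - Real.log K - σ ^ 2 / 2) / σ) := by
  set z₀ : ℝ := (Real.log K - Real.log x + σ ^ 2 / 2) / σ with hz₀
  have hKx : K = x * Real.exp (Real.log K - Real.log x) := by
    rw [Real.exp_sub, Real.exp_log hK, Real.exp_log hx]
    field_simp
  have hpoint : ∀ z : ℝ, max (x * Real.exp (z * σ - σ ^ 2 / 2) - K) 0 * nphi z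
      = Set.indicator (Set.Ici z₀)
          (fun z => x * nphi (z - σ) - K * nphi z) z := by
    intro z
    have hsplit : (x * Real.exp (z * σ - σ ^ 2 / 2) - K) * nphi z
        = x * nphi (z - σ) - K * nphi z := by
      have hexp : rexp (z * σ - σ ^ 2 / 2) * rexp (-z ^ 2 / 2) = rexp (-(z - σ) ^ 2 / 2) := by
        rw [← Real.exp_add]; congr 1; ring
      unfold nphi
      rw [div_eq_mul_inv, div_eq_mul_inv, ← hexp]
      ring
    by_cases h : z ∈ Set.Ici z₀
    · rw [Set.indicator_of_mem h, ← hsplit]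
      congr 1
      apply max_eq_left
      rw [sub_nonneg, hKx]
      apply mul_le_mul_of_nonneg_left _ hx.le
      apply Real.exp_le_exp.2
      simp only [Set.mem_Ici, hz₀] at h
      rw [div_le_iff₀ hσ] at h
      linarith
    · rw [Set.indicator_of_notMem h]
      have : x * Real.exp (z * σ - σ ^ 2 / 2) - K ≤ 0 := by
        rw [sub_nonpos, hKx]
        apply mul_le_mul_of_nonneg_left _ hx.le
        apply Real.exp_le_exp.2
        simp only [Set.mem_Ici, not_le, hz₀] at h
        rw [lt_div_iff₀ hσ] at h
        linarith
      rw [max_eq_right this, zero_mul]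
  rw [integral_congr_ae (Filter.Eventually.of_forall hpoint),
    integral_indicator measurableSet_Ici]
  have hint1 : IntegrableOn (fun z => x * nphi (z - σ)) (Set.Ici z₀) :=
    (((nphi_int.comp_sub_right σ).const_mul x)).integrableOn
  have hint2 : IntegrableOn (fun z => K * nphi z) (Set.Ici z₀) :=
    (nphi_int.const_mul K).integrableOn
  rw [integral_sub hint1 hint2, integral_const_mul, integral_const_mul,
    integral_Ici_nphi_shift, integral_Ici_nphi]
  have h1 : -(z₀ - σ) = (Real.log x - Real.log K + σ ^ 2 / 2) / σ := by
    rw [hz₀]; field_simp; ring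
  have h2 : -z₀ = (Real.log x - Real.log K - σ ^ 2 / 2) / σ := by
    rw [hz₀]; field_simp; ring
  rw [h1, h2]

lemma key_identity (σ K x : ℝ) (hσ : 0 < σ) (hK : 0 < K) (hx : 0 < x) :
    x * nphi ((Real.log x - Real.log K + σ ^ 2 / 2) / σ)
      = K * nphi ((Real.log x - Real.log K - σ ^ 2 / 2) / σ) := by
  have h : x * rexp (-((Real.log x - Real.log K + σ ^ 2 / 2) / σ) ^ 2 / 2)
      = K * rexp (-((Real.log x - Real.log K - σ ^ 2 / 2) / σ) ^ 2 / 2) := by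
    rw [← Real.exp_log hx, ← Real.exp_log hK, ← Real.exp_add, ← Real.exp_add]
    congr 1
    field_simp
    simp only [Real.log_exp]
    ring
  unfold nphi
  rw [← mul_div_assoc, ← mul_div_assoc, h]

lemma hasDerivAt_d (σ K c x : ℝ) (hx : 0 < x) :
    HasDerivAt (fun y => (Real.log y - Real.log K + c) / σ) (x⁻¹ / σ) x :=
  (((Real.hasDerivAt_log hx.ne').sub_const (Real.log K)).add_const c).div_const σ

lemma hasDerivAt_price (σ K x : ℝ) (hσ : 0 < σ) (hK : 0 < K) (hx : 0 < x) :
    HasDerivAt (fun y => y * nPhi ((Real.log y - Real.log K + σ ^ 2 / 2) / σ)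
        - K * nPhi ((Real.log y - Real.log K - σ ^ 2 / 2) / σ))
      (nPhi ((Real.log x - Real.log K + σ ^ 2 / 2) / σ)) x := by
  have h1 : HasDerivAt (fun y => nPhi ((Real.log y - Real.log K + σ ^ 2 / 2) / σ))
      (nphi ((Real.log x - Real.log K + σ ^ 2 / 2) / σ) * (x⁻¹ / σ)) x :=
    (hasDerivAt_nPhi _).comp x (hasDerivAt_d σ K _ x hx)
  have h2 : HasDerivAt (fun y => nPhi ((Real.log y - Real.log K - σ ^ 2 / 2) / σ))
      (nphi ((Real.log x - Real.log K - σ ^ 2 / 2) / σ) * (x⁻¹ / σ)) x := by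
    have := (hasDerivAt_nPhi _).comp x (hasDerivAt_d σ K (-(σ ^ 2 / 2)) x hx)
    simpa [sub_eq_add_neg, Function.comp_def] using this
  have hmul := (hasDerivAt_id x).mul h1
  have hfull := hmul.sub (h2.const_mul K)
  convert hfull using 1
  · rfl
  · rfl
  · rfl
  have hkey := key_identity σ K x hσ hK hx
  simp only [id_eq]
  linear_combination (-(x⁻¹ / σ)) * hkey

/-- For each `t ∈ [0,T)`, the Black–Scholes call price `x ↦ F(t,x)` is twice
differentiable on `(0,∞)` with
`∂²F/∂x²(t,x) = (1/(x √(2π(T-t)))) exp(-(log(x/K) + (T-t)/2)²/(2(T-t)))`. -/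
theorem stmt6 (T K : ℝ) (hT : 0 < T) (hK : 0 < K) :
    ∀ t ∈ Set.Ico 0 T, ∀ x ∈ Set.Ioi (0 : ℝ),
      DifferentiableAt ℝ (fun x' => bsCall T K t x') x ∧
      DifferentiableAt ℝ (deriv (fun x' => bsCall T K t x')) x ∧
      deriv (deriv (fun x' => bsCall T K t x')) x
        = (1 / (x * Real.sqrt (2 * Real.pi * (T - t)))) *
            Real.exp (-(Real.log (x / K) + (T - t) / 2) ^ 2 / (2 * (T - t))) := by
  intro t ht x hx
  obtain ⟨ht0, htT⟩ := ht
  have hx : (0:ℝ) < x := hx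
  have hs : 0 < T - t := sub_pos.2 htT
  set σ : ℝ := Real.sqrt (T - t) with hσdef
  have hσ : 0 < σ := Real.sqrt_pos.2 hs
  have hσ2 : σ ^ 2 = T - t := Real.sq_sqrt hs.le
  set H : ℝ → ℝ := fun y => y * nPhi ((Real.log y - Real.log K + σ ^ 2 / 2) / σ)
      - K * nPhi ((Real.log y - Real.log K - σ ^ 2 / 2) / σ) with hHdef
  have hEq : Set.EqOn (fun x' => bsCall T K t x') H (Set.Ioi 0) := by
    intro y hy
    have key := bs_integral_eq σ K y hσ hK hy
    simp only [nphi] at key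
    show bsCall T K t y = H y
    unfold bsCall
    rw [← hσdef, ← hσ2]
    exact key
  have hmem : ∀ y ∈ Set.Ioi (0:ℝ), Set.Ioi (0:ℝ) ∈ nhds y :=
    fun y hy => isOpen_Ioi.mem_nhds hy
  have hH : ∀ y ∈ Set.Ioi (0:ℝ), HasDerivAt (fun x' => bsCall T K t x')
      (nPhi ((Real.log y - Real.log K + σ ^ 2 / 2) / σ)) y := by
    intro y hy
    exact (hasDerivAt_price σ K y hσ hK hy).congr_of_eventuallyEq
      (Filter.eventuallyEq_of_mem (hmem y hy) hEq)
  have hderiv : Set.EqOn (deriv (fun x' => bsCall T K t x'))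
      (fun y => nPhi ((Real.log y - Real.log K + σ ^ 2 / 2) / σ)) (Set.Ioi 0) :=
    fun y hy => (hH y hy).deriv
  have hD : HasDerivAt (deriv (fun x' => bsCall T K t x'))
      (nphi ((Real.log x - Real.log K + σ ^ 2 / 2) / σ) * (x⁻¹ / σ)) x := by
    have h1 : HasDerivAt (fun y => nPhi ((Real.log y - Real.log K + σ ^ 2 / 2) / σ))
        (nphi ((Real.log x - Real.log K + σ ^ 2 / 2) / σ) * (x⁻¹ / σ)) x :=
      (hasDerivAt_nPhi _).comp x (hasDerivAt_d σ K _ x hx)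
    exact h1.congr_of_eventuallyEq (Filter.eventuallyEq_of_mem (hmem x hx) hderiv)
  refine ⟨(hH x hx).differentiableAt, hD.differentiableAt, ?_⟩
  rw [hD.deriv]
  rw [Real.log_div hx.ne' hK.ne', ← hσ2]
  have hsqrt : Real.sqrt (2 * Real.pi * σ ^ 2) = Real.sqrt (2 * Real.pi) * σ := by
    rw [Real.sqrt_mul (by positivity), Real.sqrt_sq hσ.le]
  rw [hsqrt]
  unfold nphi
  have harg : -((Real.log x - Real.log K + σ ^ 2 / 2) / σ) ^ 2 / 2
      = -(Real.log x - Real.log K + σ ^ 2 / 2) ^ 2 / (2 * σ ^ 2) := by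
    rw [div_pow, neg_div, div_div]
    ring_nf
  rw [harg]
  have hS : (0:ℝ) < Real.sqrt (2 * Real.pi) := Real.sqrt_pos.2 (by positivity)
  set E : ℝ := rexp (-(Real.log x - Real.log K + σ ^ 2 / 2) ^ 2 / (2 * σ ^ 2)) with hE
  field_simp
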